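/- Let n, k be natural numbers with 1 ≤ k ≤ n and let g₁ ≤ g₂ ≤ ··· ≤ gₙ be real numbers indexed by {1,...,n}. For each i ∈ {1,...,n}, define s_i = (1/C(n,k)) · ∑_{I ⊆ {1,...,n}, |I| = k, i ∈ I} max_{j∈I} g_j. Then s_i = (1/C(n,k)) · ∑_{j=i}^{n} m_{ij} · g_j, where m_{ii} = C(i−1, k−1) if i ≥ k and 0 otherwise, and for j > i: m_{ij} = C(j−2, k−2) if j ≥ k and k ≥ 2, and 0 otherwise. -/

import Mathlib

/-- The maximum of `g` over a finite index set `I` (equal to `max_{i ∈ I} g i`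
whenever `I` is nonempty). -/
noncomputable def finsetMax {α : Type*} (I : Finset α) (g : α → ℝ) : ℝ :=
  WithBot.unbotD 0 (I.sup fun a => ((g a : ℝ) : WithBot ℝ))

/-- The matrix entries m_{ij}: m_{ii} = C(i−1, k−1) if i ≥ k and 0 otherwise;
for j > i, m_{ij} = C(j−2, k−2) if j ≥ k and k ≥ 2, and 0 otherwise. -/
noncomputable def mCoef (k i j : ℕ) : ℝ :=
  if j = i then (if k ≤ i then ((i - 1).choose (k - 1) : ℝ) else 0)
  else if i < j then (if k ≤ j ∧ 2 ≤ k then ((j - 2).choose (k - 2) : ℝ) else 0)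
  else 0

/-- the sup (over ℕ) of a nonempty finset is a member. -/
lemma sup_id_mem (I : Finset ℕ) (hne : I.Nonempty) : I.sup id ∈ I := by
  have h : I.sup' hne id = I.sup id := Finset.sup'_eq_sup hne id
  rw [← h]
  exact I.max'_mem hne

/-- `finsetMax` of a monotone-on-`Icc` function equals `g` at the sup. -/
lemma finsetMax_eq (n : ℕ) (g : ℕ → ℝ)
    (hg : ∀ i ∈ Finset.Icc 1 n, ∀ j ∈ Finset.Icc 1 n, i ≤ j → g i ≤ g j)
    (I : Finset ℕ) (hI : I ⊆ Finset.Icc 1 n) (hne : I.Nonempty) :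
    finsetMax I g = g (I.sup id) := by
  have hM : I.sup id ∈ I := sup_id_mem I hne
  have h1 : I.sup (fun a => ((g a : ℝ) : WithBot ℝ)) = ((g (I.sup id) : ℝ) : WithBot ℝ) := by
    apply le_antisymm
    · exact Finset.sup_le fun x hx =>
        WithBot.coe_le_coe.mpr (hg x (hI hx) _ (hI hM) (Finset.le_sup (f := id) hx))
    · exact Finset.le_sup (f := fun a => ((g a : ℝ) : WithBot ℝ)) hM
  rw [finsetMax, h1, WithBot.unbotD_coe]

/-- Key counting bijection: subsets of `S` of card `k+1` containing `a` and
satisfying `p` correspond to subsets of `S.erase a` of card `k` satisfying the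
transported predicate. -/
lemma card_filter_mem_powersetCard (S : Finset ℕ) (a k : ℕ) (ha : a ∈ S)
    (p : Finset ℕ → Prop) [DecidablePred p]
    (hp : ∀ J ⊆ S.erase a, (p (insert a J) ↔ p J)) :
    ((S.powersetCard (k + 1)).filter (fun I => a ∈ I ∧ p I)).card
      = (((S.erase a).powersetCard k).filter p).card := by
  apply Finset.card_nbij' (fun I => I.erase a) (fun J => insert a J)
  · intro I hI
    simp only [Finset.mem_coe, Finset.mem_filter, Finset.mem_powersetCard] at hI ⊢
    obtain ⟨⟨hsub, hcard⟩, haI, hpI⟩ := hI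
    have hsub' : I.erase a ⊆ S.erase a := Finset.erase_subset_erase a hsub
    refine ⟨⟨hsub', by rw [Finset.card_erase_of_mem haI, hcard]; rfl⟩, ?_⟩
    rw [← hp _ hsub', Finset.insert_erase haI]
    exact hpI
  · intro J hJ
    simp only [Finset.mem_coe, Finset.mem_filter, Finset.mem_powersetCard] at hJ ⊢
    obtain ⟨⟨hsub, hcard⟩, hpJ⟩ := hJ
    have haJ : a ∉ J := fun h => (Finset.mem_erase.mp (hsub h)).1 rfl
    refine ⟨⟨Finset.insert_subset ha (hsub.trans (Finset.erase_subset a S)), ?_⟩,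
      Finset.mem_insert_self a J, (hp J hsub).mpr hpJ⟩
    rw [Finset.card_insert_of_notMem haJ, hcard]
  · intro I hI
    simp only [Finset.mem_coe, Finset.mem_filter] at hI
    exact Finset.insert_erase hI.2.1
  · intro J hJ
    simp only [Finset.mem_coe, Finset.mem_filter, Finset.mem_powersetCard] at hJ
    have haJ : a ∉ J := fun h => (Finset.mem_erase.mp (hJ.1.1 h)).1 rfl
    exact Finset.erase_insert haJ

/-- For 1 ≤ k ≤ n and sorted reals g₁ ≤ ⋯ ≤ gₙ indexed by
{1,...,n}, the quantity s_i = (1/C(n,k)) ∑_{|I|=k, i∈I} max_{j∈I} g_j equals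
(1/C(n,k)) ∑_{j=i}^{n} m_{ij} g_j. -/
theorem s_eq_weighted_sum (n k : ℕ) (hk : 1 ≤ k) (hkn : k ≤ n)
    (g : ℕ → ℝ) (hg : ∀ i ∈ Finset.Icc 1 n, ∀ j ∈ Finset.Icc 1 n, i ≤ j → g i ≤ g j)
    (i : ℕ) (hi : i ∈ Finset.Icc 1 n) :
    (1 / (n.choose k : ℝ)) *
        ∑ I ∈ (Finset.powersetCard k (Finset.Icc 1 n)).filter (fun I => i ∈ I),
          finsetMax I g
      = (1 / (n.choose k : ℝ)) * ∑ j ∈ Finset.Icc i n, mCoef k i j * g j := by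
  obtain ⟨hi1, hin⟩ := Finset.mem_Icc.mp hi
  congr 1
  set s := (Finset.powersetCard k (Finset.Icc 1 n)).filter (fun I => i ∈ I) with hs
  -- Basic facts about members of `s`
  have hmem : ∀ I ∈ s, I ⊆ Finset.Icc 1 n ∧ I.card = k ∧ i ∈ I := by
    intro I hI
    simp only [hs, Finset.mem_filter, Finset.mem_powersetCard] at hI
    exact ⟨hI.1.1, hI.1.2, hI.2⟩
  have hne : ∀ I ∈ s, I.Nonempty := by
    intro I hI
    exact ⟨i, (hmem I hI).2.2⟩
  -- rewrite each summand as g (I.sup id)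
  rw [Finset.sum_congr rfl (fun I hI =>
    finsetMax_eq n g hg I (hmem I hI).1 (hne I hI))]
  -- fiberwise sum over the value of the max
  have hmaps : ∀ I ∈ s, I.sup id ∈ Finset.Icc i n := by
    intro I hI
    obtain ⟨hIsub, hIcard, hiI⟩ := hmem I hI
    have hsupmem : I.sup id ∈ I := sup_id_mem I (hne I hI)
    exact Finset.mem_Icc.mpr ⟨Finset.le_sup (f := id) hiI,
      (Finset.mem_Icc.mp (hIsub hsupmem)).2⟩
  rw [← Finset.sum_fiberwise_of_maps_to hmaps (fun I => g (I.sup id))]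
  apply Finset.sum_congr rfl
  intro j hj
  obtain ⟨hij, hjn⟩ := Finset.mem_Icc.mp hj
  -- inner sum is constant g j on the fiber
  have hconst : ∑ I ∈ s.filter (fun I => I.sup id = j), g (I.sup id)
      = ((s.filter (fun I => I.sup id = j)).card : ℝ) * g j := by
    rw [Finset.sum_congr rfl (fun I hI => by
      rw [(Finset.mem_filter.mp hI).2]), Finset.sum_const, nsmul_eq_mul]
  rw [hconst]
  -- identify the fiber
  have hfiber : s.filter (fun I => I.sup id = j)
      = (Finset.powersetCard k (Finset.Icc 1 j)).filter (fun I => i ∈ I ∧ j ∈ I) := by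
    ext I
    simp only [hs, Finset.mem_filter, Finset.mem_powersetCard, and_assoc]
    constructor
    · rintro ⟨hsub, hcard, hiI, hsup⟩
      have hneI : I.Nonempty := ⟨i, hiI⟩
      have hjI : j ∈ I := hsup ▸ sup_id_mem I hneI
      refine ⟨fun x hx => Finset.mem_Icc.mpr
        ⟨(Finset.mem_Icc.mp (hsub hx)).1, hsup ▸ Finset.le_sup (f := id) hx⟩,
        hcard, hiI, hjI⟩
    · rintro ⟨hsub, hcard, hiI, hjI⟩
      refine ⟨fun x hx => Finset.mem_Icc.mpr
        ⟨(Finset.mem_Icc.mp (hsub hx)).1, le_trans (Finset.mem_Icc.mp (hsub hx)).2 hjn⟩,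
        hcard, hiI, ?_⟩
      apply le_antisymm
      · exact Finset.sup_le fun x hx => (Finset.mem_Icc.mp (hsub hx)).2
      · exact Finset.le_sup (f := id) hjI
  rw [hfiber]
  -- now count the fiber and compare with mCoef
  congr 1
  rcases eq_or_lt_of_le hij with rfl | hlt
  · -- case j = i : count = C(i-1, k-1)
    have hii : i ∈ Finset.Icc 1 i := Finset.mem_Icc.mpr ⟨hi1, le_refl i⟩
    have heqf : (Finset.powersetCard k (Finset.Icc 1 i)).filter (fun I => i ∈ I ∧ i ∈ I)
        = (Finset.powersetCard k (Finset.Icc 1 i)).filter (fun I => i ∈ I ∧ True) :=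
      Finset.filter_congr (fun I _ => by simp)
    have hcount : ((Finset.powersetCard k (Finset.Icc 1 i)).filter
        (fun I => i ∈ I ∧ i ∈ I)).card = (i - 1).choose (k - 1) := by
      rw [heqf]
      have hk' : k = (k - 1) + 1 := (Nat.succ_pred_eq_of_pos hk).symm
      rw [hk', card_filter_mem_powersetCard _ i (k - 1) hii (fun _ => True) (by simp)]
      rw [Finset.filter_true, Finset.card_powersetCard, Finset.card_erase_of_mem hii,
        Nat.card_Icc]
      congr 1 <;> omega
    rw [hcount, mCoef, if_pos rfl]
    by_cases hki : k ≤ i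
    · rw [if_pos hki]
    · rw [if_neg hki, Nat.choose_eq_zero_of_lt (by omega), Nat.cast_zero]
  · -- case j > i
    rw [mCoef, if_neg (by omega), if_pos hlt]
    by_cases h2k : 2 ≤ k
    · -- count = C(j-2, k-2)
      have hjj : j ∈ Finset.Icc 1 j := Finset.mem_Icc.mpr ⟨by omega, le_refl j⟩
      have hie : i ∈ (Finset.Icc 1 j).erase j :=
        Finset.mem_erase.mpr ⟨by omega, Finset.mem_Icc.mpr ⟨hi1, by omega⟩⟩
      have heqf : (Finset.powersetCard k (Finset.Icc 1 j)).filter (fun I => i ∈ I ∧ j ∈ I)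
          = (Finset.powersetCard k (Finset.Icc 1 j)).filter (fun I => j ∈ I ∧ i ∈ I) :=
        Finset.filter_congr (fun I _ => by constructor <;> exact fun h => ⟨h.2, h.1⟩)
      have step1 : ((Finset.powersetCard k (Finset.Icc 1 j)).filter
          (fun I => j ∈ I ∧ i ∈ I)).card
          = ((((Finset.Icc 1 j).erase j).powersetCard (k - 1)).filter
            (fun J => i ∈ J)).card := by
        have hk' : k = (k - 1) + 1 := by omega
        rw [hk']
        exact card_filter_mem_powersetCard _ j (k - 1) hjj (fun J => i ∈ J)
          (by intro J hJ
              simp only [Finset.mem_insert]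
              exact ⟨fun h => h.resolve_left (by omega), Or.inr⟩)
      have heqf2 : (((Finset.Icc 1 j).erase j).powersetCard (k - 1)).filter
            (fun J => i ∈ J)
          = (((Finset.Icc 1 j).erase j).powersetCard (k - 1)).filter
            (fun J => i ∈ J ∧ True) :=
        Finset.filter_congr (fun I _ => by simp)
      have step2 : ((((Finset.Icc 1 j).erase j).powersetCard (k - 1)).filter
          (fun J => i ∈ J)).card
          = (((((Finset.Icc 1 j).erase j).erase i).powersetCard (k - 2))).card := by
        rw [heqf2]
        have hk'' : k - 1 = (k - 2) + 1 := by omega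
        rw [hk'', card_filter_mem_powersetCard _ i (k - 2) hie (fun _ => True) (by simp),
          Finset.filter_true]
      have hcard2 : ((((Finset.Icc 1 j).erase j).erase i)).card = j - 2 := by
        rw [Finset.card_erase_of_mem hie, Finset.card_erase_of_mem hjj, Nat.card_Icc]
        omega
      have hcount : ((Finset.powersetCard k (Finset.Icc 1 j)).filter
          (fun I => i ∈ I ∧ j ∈ I)).card = (j - 2).choose (k - 2) := by
        rw [heqf, step1, step2, Finset.card_powersetCard, hcard2]
      rw [hcount]
      by_cases hkj : k ≤ j
      · rw [if_pos ⟨hkj, h2k⟩]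
      · rw [if_neg (fun h => hkj h.1), Nat.choose_eq_zero_of_lt (by omega), Nat.cast_zero]
    · -- k = 1 : fiber is empty
      rw [if_neg (fun h => h2k h.2)]
      have hempty : ((Finset.powersetCard k (Finset.Icc 1 j)).filter
          (fun I => i ∈ I ∧ j ∈ I)) = ∅ := by
        ext I
        simp only [Finset.mem_filter, Finset.mem_powersetCard, Finset.notMem_empty,
          iff_false, not_and]
        intro ⟨hsub, hcard⟩ hiI hjI
        have : 2 ≤ I.card := Finset.one_lt_card.mpr ⟨i, hiI, j, hjI, by omega⟩
        omega
      rw [hempty, Finset.card_empty, Nat.cast_zero]
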